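/- Let I ⊆ ℝ be an open interval, m ∉ {−1, −2}, and let a, b, c : I → ℝ be differentiable functions whose values are pairwise distinct at every point of I, satisfying at every point the pairwise derivative relations (with a', b', c' the derivatives of a, b, c). Suppose moreover that the function α := (a−b)²/(2√P) is differentiable and satisfies α' = α·(c − a − b) on I. Then S ≡ 0 on I, and consequently the expression f' := −S/(2(m+1)P) vanishes identically on I. -/

import Mathlib

/-- P := a² + b² + c² − ab − bc − ac -/
def Pe (a b c : ℝ) : ℝ := a ^ 2 + b ^ 2 + c ^ 2 - a * b - b * c - a * c

/-- S := a²b + ab² + a²c + ac² + b²c + bc² − 6abc -/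
def Se (a b c : ℝ) : ℝ :=
  a ^ 2 * b + a * b ^ 2 + a ^ 2 * c + a * c ^ 2 + b ^ 2 * c + b * c ^ 2 - 6 * a * b * c

/-- Let I ⊆ ℝ be an open interval, m ∉ {−1, −2}, and let
a, b, c : I → ℝ be differentiable functions whose values are pairwise distinct at
every point of I, satisfying at every point the pairwise derivative relations
(with a', b', c' the derivatives of a, b, c).  Suppose moreover that the function
α := (a−b)²/(2√P) is differentiable and satisfies α' = α·(c − a − b) on I.
Then S ≡ 0 on I, and consequently the expression f' := −S/(2(m+1)P) vanishes
identically on I. -/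
theorem stmt_3 (m : ℝ) (hm1 : m ≠ -1) (hm2 : m ≠ -2)
    (I : Set ℝ) (hI : IsOpen I) (hIc : I.OrdConnected)
    (a b c : ℝ → ℝ)
    (hda : ∀ s ∈ I, DifferentiableAt ℝ a s)
    (hdb : ∀ s ∈ I, DifferentiableAt ℝ b s)
    (hdc : ∀ s ∈ I, DifferentiableAt ℝ c s)
    (hab : ∀ s ∈ I, a s ≠ b s) (hac : ∀ s ∈ I, a s ≠ c s) (hbc : ∀ s ∈ I, b s ≠ c s)
    (h1 : ∀ s ∈ I, (deriv a s - deriv b s) / (a s - b s)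
        = -(a s + b s) - c s / (m + 1)
          - (1 / (2 * (m + 1))) * ((a s - c s) * (b s - c s) * (a s + b s - 2 * c s)
              / Pe (a s) (b s) (c s)))
    (h2 : ∀ s ∈ I, (deriv a s - deriv c s) / (a s - c s)
        = -(a s + c s) - b s / (m + 1)
          - (1 / (2 * (m + 1))) * ((a s - b s) * (c s - b s) * (a s + c s - 2 * b s)
              / Pe (a s) (b s) (c s)))
    (h3 : ∀ s ∈ I, (deriv b s - deriv c s) / (b s - c s)
        = -(b s + c s) - a s / (m + 1)
          - (1 / (2 * (m + 1))) * ((b s - a s) * (c s - a s) * (b s + c s - 2 * a s)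
              / Pe (a s) (b s) (c s)))
    (hα : ∀ s ∈ I,
        HasDerivAt (fun t => (a t - b t) ^ 2 / (2 * Real.sqrt (Pe (a t) (b t) (c t))))
          (((a s - b s) ^ 2 / (2 * Real.sqrt (Pe (a s) (b s) (c s))))
            * (c s - a s - b s)) s) :
    ∀ s ∈ I, Se (a s) (b s) (c s) = 0 ∧
      -(Se (a s) (b s) (c s)) / (2 * (m + 1) * Pe (a s) (b s) (c s)) = 0 := by
  intro s hs
  have hab' : a s - b s ≠ 0 := sub_ne_zero.mpr (hab s hs)
  have hac' : a s - c s ≠ 0 := sub_ne_zero.mpr (hac s hs)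
  have hbc' : b s - c s ≠ 0 := sub_ne_zero.mpr (hbc s hs)
  have hm1' : m + 1 ≠ 0 := by intro h; apply hm1; linarith
  have hm2' : m + 2 ≠ 0 := by intro h; apply hm2; linarith
  have hP0 : 0 < Pe (a s) (b s) (c s) := by
    have h1 : 0 < (a s - b s) ^ 2 := (sq_nonneg _).lt_of_ne (Ne.symm (pow_ne_zero 2 hab'))
    simp only [Pe]
    nlinarith [sq_nonneg (b s - c s), sq_nonneg (a s - c s)]
  have hPne : Pe (a s) (b s) (c s) ≠ 0 := ne_of_gt hP0
  have hq0 : 0 < Real.sqrt (Pe (a s) (b s) (c s)) := Real.sqrt_pos.mpr hP0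
  have hq2 : Real.sqrt (Pe (a s) (b s) (c s)) ^ 2 = Pe (a s) (b s) (c s) :=
    Real.sq_sqrt hP0.le
  set A := a s with hA
  set B := b s with hB
  set C := c s with hC
  set q := Real.sqrt (Pe A B C) with hqdef
  set da := deriv a s with hda'
  set db := deriv b s with hdb'
  set dc := deriv c s with hdc'
  -- derivative relations in polynomial form
  have e1 : 2 * (m + 1) * Pe A B C * (da - db)
      = (A - B) * (-(2 * (m + 1) * Pe A B C * (A + B)) - 2 * Pe A B C * C
          - (A - C) * (B - C) * (A + B - 2 * C)) := by
    have h := h1 s hs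
    rw [← hA, ← hB, ← hC, ← hda', ← hdb'] at h
    field_simp at h
    refine mul_left_cancel₀ hm1' ?_
    linear_combination (m + 1) * h
  have e2 : 2 * (m + 1) * Pe A B C * (da - dc)
      = (A - C) * (-(2 * (m + 1) * Pe A B C * (A + C)) - 2 * Pe A B C * B
          - (A - B) * (C - B) * (A + C - 2 * B)) := by
    have h := h2 s hs
    rw [← hA, ← hB, ← hC, ← hda', ← hdc'] at h
    field_simp at h
    refine mul_left_cancel₀ hm1' ?_
    linear_combination (m + 1) * h
  have e3 : 2 * (m + 1) * Pe A B C * (db - dc)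
      = (B - C) * (-(2 * (m + 1) * Pe A B C * (B + C)) - 2 * Pe A B C * A
          - (B - A) * (C - A) * (B + C - 2 * A)) := by
    have h := h3 s hs
    rw [← hA, ← hB, ← hC, ← hdb', ← hdc'] at h
    field_simp at h
    refine mul_left_cancel₀ hm1' ?_
    linear_combination (m + 1) * h
  -- derivative of P along the curve
  have ha := (hda s hs).hasDerivAt
  have hb := (hdb s hs).hasDerivAt
  have hc := (hdc s hs).hasDerivAt
  have hPd : HasDerivAt (fun t => Pe (a t) (b t) (c t))
      ((2 * A - B - C) * da + (2 * B - A - C) * db + (2 * C - A - B) * dc) s := by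
    have h := (((((ha.pow 2).add (hb.pow 2)).add (hc.pow 2)).sub (ha.mul hb)).sub
      (hb.mul hc)).sub (ha.mul hc)
    simp only [Pe]
    refine h.congr_deriv ?_
    push_cast
    ring
  have hsq : HasDerivAt (fun t => Real.sqrt (Pe (a t) (b t) (c t)))
      (((2 * A - B - C) * da + (2 * B - A - C) * db + (2 * C - A - B) * dc) / (2 * q)) s :=
    hPd.sqrt hPne
  have hden : HasDerivAt (fun t => 2 * Real.sqrt (Pe (a t) (b t) (c t)))
      (2 * (((2 * A - B - C) * da + (2 * B - A - C) * db + (2 * C - A - B) * dc) / (2 * q))) s :=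
    hsq.const_mul 2
  have hnum : HasDerivAt (fun t => (a t - b t) ^ 2)
      ((2 : ℕ) * (A - B) ^ 1 * (da - db)) s := (ha.sub hb).pow 2
  have hqne : (2 : ℝ) * q ≠ 0 := by positivity
  have htot := hnum.div hden hqne
  have heq := htot.unique (hα s hs)
  -- clear the square roots
  have step2 : 4 * (da - db) * Pe A B C - (A - B) *
      ((2 * A - B - C) * da + (2 * B - A - C) * db + (2 * C - A - B) * dc)
      = 2 * (A - B) * (C - A - B) * Pe A B C := by
    have hqne' : q ≠ 0 := ne_of_gt hq0
    rw [← hA, ← hB, ← hC, ← hqdef] at heq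
    field_simp at heq
    have h4 : (4 : ℝ) * q * (A - B) ≠ 0 := by
      apply mul_ne_zero (mul_ne_zero (by norm_num) (ne_of_gt hq0)) hab'
    rw [← hq2]
    refine mul_left_cancel₀ h4 ?_
    linear_combination 4 * q * (A - B) * heq
  have key : (A - B) * (2 * (m + 2) * Pe A B C * Se A B C) = 0 := by
    simp only [Pe, Se] at step2 e1 e2 e3 ⊢
    linear_combination (-(2 * (m + 1) * (A ^ 2 + B ^ 2 + C ^ 2 - A * B - B * C - A * C)))
        * step2
      + (4 * (A ^ 2 + B ^ 2 + C ^ 2 - A * B - B * C - A * C) - (A - B) ^ 2) * e1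
      + (-((A - B) * (A - C))) * e2 + (-((A - B) * (B - C))) * e3
  have hS : Se A B C = 0 := by
    have h := mul_eq_zero.mp key
    rcases h with h | h
    · exact absurd h hab'
    · have h' := mul_eq_zero.mp h
      rcases h' with h' | h'
      · exfalso
        have : (2 : ℝ) * (m + 2) ≠ 0 := by
          intro hz
          apply hm2'
          linarith [mul_eq_zero.mp hz]
        rcases mul_eq_zero.mp h' with h'' | h''
        · rcases mul_eq_zero.mp h'' with h3 | h3
          · norm_num at h3
          · exact hm2' h3
        · exact hPne h''
      · exact h'
  refine ⟨hS, ?_⟩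
  rw [hS]
  simp
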